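/- For A ≥ 0 and Z > 0 with extremal eigenvalues a ≥ b > 0, the operator norm of AZ satisfies ‖AZ‖_∞ ≤ ((a+b)/(2√(ab)))·ρ(AZ), where ρ denotes the spectral radius. -/

import Mathlib

open Matrix ComplexOrder

lemma auxPSD {m : ℕ} {P : Matrix (Fin m) (Fin m) ℂ} (hP : P.IsHermitian) (c₁ c₀ : ℝ)
    (h : ∀ i, 0 ≤ c₁ * hP.eigenvalues i - c₀ - hP.eigenvalues i ^ 2) :
    ((c₁ : ℂ) • P - (c₀ : ℂ) • 1 - P * P).PosSemidef := by
  set U : Matrix (Fin m) (Fin m) ℂ := ↑(hP.eigenvectorUnitary) with hU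
  have hUU : U * star U = 1 := Matrix.mem_unitaryGroup_iff.mp hP.eigenvectorUnitary.2
  have hUU' : star U * U = 1 := Matrix.mem_unitaryGroup_iff'.mp hP.eigenvectorUnitary.2
  set D : Matrix (Fin m) (Fin m) ℂ := diagonal (RCLike.ofReal ∘ hP.eigenvalues) with hD
  have hPD : P = U * D * star U := hP.spectral_theorem
  have e1 : (c₁ : ℂ) • P = U * ((c₁ : ℂ) • D) * star U := by
    rw [hPD, mul_smul_comm, smul_mul_assoc]
  have e0 : (c₀ : ℂ) • (1 : Matrix (Fin m) (Fin m) ℂ) = U * ((c₀ : ℂ) • 1) * star U := by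
    rw [mul_smul_comm, smul_mul_assoc, Matrix.mul_one, hUU]
  have e2 : P * P = U * (D * D) * star U := by
    rw [hPD, Matrix.mul_assoc (U * D) (star U) (U * D * star U),
      ← Matrix.mul_assoc (star U) (U * D) (star U), ← Matrix.mul_assoc (star U) U D, hUU',
      Matrix.one_mul, ← Matrix.mul_assoc, Matrix.mul_assoc (U * D) D (star U),
      ← Matrix.mul_assoc U D D]
    simp [Matrix.mul_assoc]
  have key : (c₁ : ℂ) • P - (c₀ : ℂ) • 1 - P * P
      = U * ((c₁ : ℂ) • D - (c₀ : ℂ) • 1 - D * D) * star U := by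
    rw [Matrix.mul_sub, Matrix.sub_mul, Matrix.mul_sub, Matrix.sub_mul, ← e1, ← e0, ← e2]
  rw [key]
  have hdiag : ((c₁ : ℂ) • D - (c₀ : ℂ) • 1 - D * D).PosSemidef := by
    have hde : (c₁ : ℂ) • D - (c₀ : ℂ) • 1 - D * D
        = diagonal (fun i => ((c₁ * hP.eigenvalues i - c₀ - hP.eigenvalues i ^ 2 : ℝ) : ℂ)) := by
      rw [hD, diagonal_mul_diagonal, ← Matrix.diagonal_one, ← diagonal_smul, ← diagonal_smul,
        diagonal_sub, diagonal_sub]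
      refine congrArg diagonal (funext fun i => ?_)
      simp only [Function.comp_apply, Pi.smul_apply, Pi.sub_apply, smul_eq_mul,
        show (RCLike.ofReal : ℝ → ℂ) = Complex.ofReal from rfl]
      push_cast
      ring
    rw [hde]
    exact Matrix.PosSemidef.diagonal fun i => Complex.zero_le_real.mpr (h i)
  simpa [Matrix.star_eq_conjTranspose] using hdiag.mul_mul_conjTranspose_same U

lemma auxReQuad {m : ℕ} {P : Matrix (Fin m) (Fin m) ℂ} (hP : P.PosSemidef) (v : Fin m → ℂ) :
    0 ≤ (star v ⬝ᵥ (P *ᵥ v)).re :=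
  hP.re_dotProduct_nonneg v

lemma auxNormSq {m : ℕ} (v : Fin m → ℂ) :
    ‖(WithLp.equiv 2 (Fin m → ℂ)).symm v‖ ^ 2 = (star v ⬝ᵥ v).re := by
  rw [← inner_self_eq_norm_sq (𝕜 := ℂ), show inner ℂ ((WithLp.equiv 2 (Fin m → ℂ)).symm v)
    ((WithLp.equiv 2 (Fin m → ℂ)).symm v) = star v ⬝ᵥ v from
    (EuclideanSpace.inner_toLp_toLp v v).trans (dotProduct_comm _ _)]
  rfl

set_option maxHeartbeats 2000000 in
set_option synthInstance.maxHeartbeats 400000 in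
theorem opNorm_le_spectralRadius {n : ℕ} (A Z : Matrix (Fin n) (Fin n) ℂ)
    (hA : A.PosSemidef) (hZ : Z.PosDef) (a b : ℝ)
    (ha : IsGreatest (Set.range hZ.1.eigenvalues) a)
    (hb : IsLeast (Set.range hZ.1.eigenvalues) b) :
    ‖Matrix.toEuclideanCLM (𝕜 := ℂ) (A * Z)‖ ≤
      (a + b) / (2 * Real.sqrt (a * b)) * (spectralRadius ℂ (A * Z)).toReal := by
  obtain ⟨i₀, hi₀⟩ := hb.1
  have hb0 : 0 < b := hi₀ ▸ hZ.eigenvalues_pos i₀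
  have hab : b ≤ a := ha.2 hb.1
  have ha0 : 0 < a := lt_of_lt_of_le hb0 hab
  set r : ℝ := (spectralRadius ℂ (A * Z)).toReal with hrdef
  have hr0 : 0 ≤ r := ENNReal.toReal_nonneg
  -- the square root of Z
  open scoped MatrixOrder Matrix.Norms.L2Operator in
  set W := CFC.sqrt Z with hWdef
  have hW : W.PosSemidef := by
    open scoped MatrixOrder Matrix.Norms.L2Operator in
    exact (CFC.sqrt_nonneg Z).posSemidef
  have hWH : Wᴴ = W := hW.1
  have hWW : W * W = Z := by
    open scoped MatrixOrder Matrix.Norms.L2Operator in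
    exact CFC.sqrt_mul_sqrt_self Z hZ.posSemidef.nonneg
  have hdetW : IsUnit W.det := by
    rw [isUnit_iff_ne_zero]
    intro h
    apply hZ.det_pos.ne'
    rw [← hWW, det_mul, h, mul_zero]
  have hWiW : W⁻¹ * W = 1 := Matrix.nonsing_inv_mul W hdetW
  have hWWi : W * W⁻¹ = 1 := Matrix.mul_nonsing_inv W hdetW
  set M := W * A * W with hMdef
  have hM : M.PosSemidef := by
    have := hA.mul_mul_conjTranspose_same W
    rwa [hWH] at this
  -- the spectra of A * Z and M agree
  have hu : IsUnit W := (Matrix.isUnit_iff_isUnit_det W).mpr hdetW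
  have hAZ : A * Z = W⁻¹ * M * W := by
    have hcanc : W⁻¹ * M = A * W := by
      rw [hMdef, Matrix.mul_assoc W A W, ← Matrix.mul_assoc W⁻¹ W (A * W), hWiW, Matrix.one_mul]
    rw [hcanc, Matrix.mul_assoc, hWW]
  have hspec : spectrum ℂ (A * Z) = spectrum ℂ M := by
    have hco : ((hu.unit⁻¹ : (Matrix (Fin n) (Fin n) ℂ)ˣ) : Matrix (Fin n) (Fin n) ℂ) = W⁻¹ := by
      rw [Matrix.coe_units_inv, hu.unit_spec]
    have h1 := spectrum.units_conjugate' (R := ℂ) (a := M) (u := hu.unit)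
    rw [hco, hu.unit_spec] at h1
    rw [hAZ, h1]
  -- finiteness of the spectral radius
  have hfin : spectralRadius ℂ (A * Z) ≠ ⊤ := by
    have hfs := Matrix.finite_spectrum (R := ℂ) (A * Z)
    have : spectralRadius ℂ (A * Z) ≤ ↑(hfs.toFinset.sup (fun k => ‖k‖₊)) := by
      rw [spectralRadius]
      exact iSup₂_le fun k hk => ENNReal.coe_le_coe.mpr
        (Finset.le_sup (hfs.mem_toFinset.mpr hk))
    exact (lt_of_le_of_lt this ENNReal.coe_lt_top).ne
  -- every eigenvalue of M is at most r
  have hμr : ∀ i, hM.1.eigenvalues i ≤ r := by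
    intro i
    have hmem : ((hM.1.eigenvalues i : ℝ) : ℂ) ∈ spectrum ℂ (A * Z) := by
      rw [hspec]
      have h0 := hM.1.eigenvalues_mem_spectrum_real i
      have h2 := spectrum.algebraMap_mem_iff (S := ℂ)
        (R := ℝ) (A := Matrix (Fin n) (Fin n) ℂ) (a := M) (r := hM.1.eigenvalues i)
      rw [Complex.coe_algebraMap] at h2
      exact h2.mpr h0
    have hle : (‖((hM.1.eigenvalues i : ℝ) : ℂ)‖₊ : ENNReal) ≤ spectralRadius ℂ (A * Z) :=
      le_iSup₂ (f := fun k (_ : k ∈ spectrum ℂ (A * Z)) => (‖k‖₊ : ENNReal)) _ hmem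
    have h3 := ENNReal.toReal_mono hfin hle
    simp only [ENNReal.coe_toReal, coe_nnnorm, Complex.norm_real] at h3
    rw [Real.norm_eq_abs, abs_of_nonneg (hM.eigenvalues_nonneg i)] at h3
    exact h3
  -- two positive semidefinite matrices
  have hP₁ : (((a + b : ℝ) : ℂ) • Z - ((a * b : ℝ) : ℂ) • 1 - Z * Z).PosSemidef :=
    auxPSD hZ.1 (a + b) (a * b) fun i => by
      have h1 : hZ.1.eigenvalues i ≤ a := ha.2 ⟨i, rfl⟩
      have h2 : b ≤ hZ.1.eigenvalues i := hb.2 ⟨i, rfl⟩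
      nlinarith
  have hP₂ : ((r : ℂ) • A - A * Z * A).PosSemidef := by
    have h2 := auxPSD hM.1 r 0 fun i => by
      have h1 := hμr i
      have h0 := hM.eigenvalues_nonneg i
      nlinarith
    rw [Complex.ofReal_zero, zero_smul, sub_zero] at h2
    have h3 := h2.mul_mul_conjTranspose_same W⁻¹
    have hWiH : (W⁻¹)ᴴ = W⁻¹ := by rw [Matrix.conjTranspose_nonsing_inv, hWH]
    rw [hWiH] at h3
    have c1 : W⁻¹ * M = A * W := by
      rw [hMdef, Matrix.mul_assoc W A W, ← Matrix.mul_assoc W⁻¹ W (A * W), hWiW, Matrix.one_mul]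
    have c2 : M * W⁻¹ = W * A := by
      rw [hMdef, Matrix.mul_assoc (W * A) W W⁻¹, hWWi, Matrix.mul_one]
    have heq : W⁻¹ * ((r : ℂ) • M - M * M) * W⁻¹ = (r : ℂ) • A - A * Z * A := by
      have expand : W⁻¹ * ((r : ℂ) • M - M * M) * W⁻¹
          = (r : ℂ) • (W⁻¹ * M * W⁻¹) - (W⁻¹ * M) * (M * W⁻¹) := by
        rw [Matrix.mul_sub, Matrix.sub_mul, mul_smul_comm, smul_mul_assoc,
          Matrix.mul_assoc W⁻¹ (M * M) W⁻¹, Matrix.mul_assoc M M W⁻¹,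
          ← Matrix.mul_assoc W⁻¹ M (M * W⁻¹)]
      rw [expand, c1, c2]
      congr 1
      · rw [Matrix.mul_assoc A W W⁻¹, hWWi, Matrix.mul_one]
      · rw [Matrix.mul_assoc A W (W * A), ← Matrix.mul_assoc W W A, hWW, ← Matrix.mul_assoc]
    rwa [heq] at h3
  -- the operator norm bound
  have hsqp : 0 < Real.sqrt (a * b) := Real.sqrt_pos.mpr (by positivity)
  have hC : 0 ≤ (a + b) / (2 * Real.sqrt (a * b)) * r := by positivity
  have hgoal : ‖toEuclideanCLM (𝕜 := ℂ) (Z * A)‖ ≤ (a + b) / (2 * Real.sqrt (a * b)) * r := by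
    apply ContinuousLinearMap.opNorm_le_bound _ hC
    intro x
    set u : Fin n → ℂ := (WithLp.equiv 2 (Fin n → ℂ)) x with hu
    set y : Fin n → ℂ := A *ᵥ u with hy
    set t : ℝ := ‖(WithLp.equiv 2 (Fin n → ℂ)).symm y‖ with htdef
    have ht0 : 0 ≤ t := norm_nonneg _
    have hs0 : 0 ≤ ‖x‖ := norm_nonneg x
    have ht2 : t ^ 2 = (star y ⬝ᵥ y).re := auxNormSq y
    have hxu : x = (WithLp.equiv 2 (Fin n → ℂ)).symm u := by simp [hu]
    have hTx : (toEuclideanCLM (𝕜 := ℂ) (Z * A)) x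
        = (WithLp.equiv 2 (Fin n → ℂ)).symm ((Z * A) *ᵥ u) := by
      conv_lhs => rw [hxu]
      rw [toEuclideanCLM_toLp]
      simp [Matrix.toLin'_apply]
    have hZAy : (Z * A) *ᵥ u = Z *ᵥ y := by rw [← Matrix.mulVec_mulVec]
    have hN2 : ‖(toEuclideanCLM (𝕜 := ℂ) (Z * A)) x‖ ^ 2 = (star y ⬝ᵥ ((Z * Z) *ᵥ y)).re := by
      rw [hTx, auxNormSq]
      rw [hZAy, star_mulVec, ← Matrix.dotProduct_mulVec, Matrix.mulVec_mulVec, hZ.1]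
    have hγ : (star u ⬝ᵥ y).re ≤ ‖x‖ * t := by
      have hinner : (inner ℂ x ((WithLp.equiv 2 (Fin n → ℂ)).symm y) : ℂ) = star u ⬝ᵥ y := by
        conv_lhs => rw [hxu]
        exact (EuclideanSpace.inner_toLp_toLp u y).trans (dotProduct_comm _ _)
      calc (star u ⬝ᵥ y).re
          = RCLike.re (inner ℂ x ((WithLp.equiv 2 (Fin n → ℂ)).symm y) : ℂ) := by rw [hinner]; rfl
        _ ≤ ‖x‖ * t := re_inner_le_norm _ _
    have hquad1 := auxReQuad hP₁ y
    have hexp1 : ((((a + b : ℝ) : ℂ) • Z - ((a * b : ℝ) : ℂ) • 1 - Z * Z) *ᵥ y)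
        = ((a + b : ℝ) : ℂ) • (Z *ᵥ y) - ((a * b : ℝ) : ℂ) • y - (Z * Z) *ᵥ y := by
      rw [Matrix.sub_mulVec, Matrix.sub_mulVec, Matrix.smul_mulVec,
        Matrix.smul_mulVec, Matrix.one_mulVec]
    rw [hexp1] at hquad1
    simp only [dotProduct_sub, dotProduct_smul, smul_eq_mul, Complex.sub_re,
      Complex.re_ofReal_mul] at hquad1
    have hquad2 := auxReQuad hP₂ u
    have hexp2 : (((r : ℂ) • A - A * Z * A) *ᵥ u) = (r : ℂ) • y - (A * Z * A) *ᵥ u := by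
      rw [Matrix.sub_mulVec, Matrix.smul_mulVec]
    rw [hexp2] at hquad2
    have hmid : star u ⬝ᵥ ((A * Z * A) *ᵥ u) = star y ⬝ᵥ (Z *ᵥ y) := by
      have h1 : (A * Z * A) *ᵥ u = A *ᵥ (Z *ᵥ y) := by
        rw [← Matrix.mulVec_mulVec, ← Matrix.mulVec_mulVec]
      rw [h1, Matrix.dotProduct_mulVec,
        show star u ᵥ* A = star y from by rw [hy, star_mulVec, hA.1]]
    simp only [dotProduct_sub, dotProduct_smul, smul_eq_mul, Complex.sub_re,
      Complex.re_ofReal_mul, hmid] at hquad2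
    -- final arithmetic
    set N : ℝ := ‖(toEuclideanCLM (𝕜 := ℂ) (Z * A)) x‖ with hNdef
    have hN0 : 0 ≤ N := norm_nonneg _
    set s : ℝ := ‖x‖ with hsdef
    set α : ℝ := (star y ⬝ᵥ (Z *ᵥ y)).re with hαdef
    set γ : ℝ := (star u ⬝ᵥ y).re with hγdef
    set q : ℝ := Real.sqrt (a * b) with hqdef
    have hq2 : q ^ 2 = a * b := Real.sq_sqrt (by positivity)
    have hα : α ≤ r * (s * t) := by
      have h5 : α ≤ r * γ := by linarith
      have h6 : r * γ ≤ r * (s * t) := mul_le_mul_of_nonneg_left hγ hr0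
      linarith
    have h4 : N ^ 2 ≤ (a + b) * (r * (s * t)) - (a * b) * t ^ 2 := by
      have h7 : (a + b) * α ≤ (a + b) * (r * (s * t)) :=
        mul_le_mul_of_nonneg_left hα (by linarith)
      have h8 : N ^ 2 ≤ (a + b) * α - (a * b) * t ^ 2 := by rw [hN2, ht2]; linarith
      linarith
    have key : N * (2 * q) ≤ (a + b) * r * s := by
      rcases eq_or_lt_of_le ht0 with hteq | htpos
      · rw [← hteq] at h4
        have hN2le : N ^ 2 ≤ 0 := by rw [mul_zero, mul_zero] at h4; nlinarith
        have hNle : N ≤ 0 := by nlinarith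
        have hN' : N = 0 := le_antisymm hNle hN0
        rw [hN', zero_mul]
        have := mul_nonneg (mul_nonneg (by linarith : (0:ℝ) ≤ a + b) hr0) hs0
        linarith
      · have e1 : 2 * q * N * t ≤ q ^ 2 * t ^ 2 + N ^ 2 := by nlinarith [sq_nonneg (q * t - N)]
        have e2 : q ^ 2 * t ^ 2 = a * b * t ^ 2 := by rw [hq2]
        have h5 : (N * (2 * q)) * t ≤ ((a + b) * r * s) * t := by
          have : 2 * q * N * t ≤ (a + b) * (r * (s * t)) := by linarith
          calc (N * (2 * q)) * t = 2 * q * N * t := by ring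
            _ ≤ (a + b) * (r * (s * t)) := this
            _ = ((a + b) * r * s) * t := by ring
        exact le_of_mul_le_mul_right h5 htpos
    calc N ≤ (a + b) * r * s / (2 * q) := by
          rw [le_div_iff₀ (by positivity)]
          linarith
      _ = (a + b) / (2 * q) * r * s := by ring
  calc ‖toEuclideanCLM (𝕜 := ℂ) (A * Z)‖
      = ‖toEuclideanCLM (𝕜 := ℂ) (Z * A)‖ := by
        rw [show Z * A = star (A * Z) from by
          rw [StarMul.star_mul, Matrix.star_eq_conjTranspose, Matrix.star_eq_conjTranspose, hA.1, hZ.1]]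
        rw [map_star, ContinuousLinearMap.star_eq_adjoint]
        exact (ContinuousLinearMap.adjoint.norm_map _).symm
    _ ≤ _ := hgoal
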